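/- Let X ⊆ ℝ^d be a finite set spanning ℝ^d, and let x₁,…,x_d ∈ X be chosen to maximize |det(x₁,…,x_d)| over all d-tuples of elements of X. Then {x₁,…,x_d} is a (1-approximate) barycentric spanner of X: every x ∈ X can be written as a linear combination Σᵢ αᵢ xᵢ with all coefficients αᵢ ∈ [−1, 1]. -/

import Mathlib

/-- A tuple of elements of `X ⊆ ℝ^d` maximizing the absolute determinant is a
`1`-approximate barycentric spanner of `X`. -/
theorem det_maximizer_is_barycentric_spanner {d : ℕ} (X : Finset (Fin d → ℝ))
    (hspan : Submodule.span ℝ (X : Set (Fin d → ℝ)) = ⊤)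
    (x : Fin d → (Fin d → ℝ)) (hx : ∀ i, x i ∈ X)
    (hmax : ∀ y : Fin d → (Fin d → ℝ), (∀ i, y i ∈ X) →
      |Matrix.det (Matrix.of fun i j => y j i)| ≤ |Matrix.det (Matrix.of fun i j => x j i)|) :
    ∀ v ∈ X, ∃ α : Fin d → ℝ, (∀ i, |α i| ≤ 1) ∧ v = ∑ i, α i • x i := by
  set M : Matrix (Fin d) (Fin d) ℝ := Matrix.of fun i j => x j i with hM
  -- Step 1: det M ≠ 0
  have hdet : M.det ≠ 0 := by
    obtain ⟨s, hsX, hs_span, hs_li⟩ := exists_linearIndependent ℝ (X : Set (Fin d → ℝ))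
    rw [hspan] at hs_span
    have : Fintype s := Set.Finite.fintype (Set.Finite.subset X.finite_toSet hsX)
    let b : Module.Basis s ℝ (Fin d → ℝ) := Module.Basis.mk hs_li (by rw [Subtype.range_coe]; exact hs_span.ge)
    let e : Fin d ≃ s := b.indexEquiv (Pi.basisFun ℝ (Fin d)) |>.symm
    set y : Fin d → (Fin d → ℝ) := fun i => (e i : Fin d → ℝ) with hy
    have hyX : ∀ i, y i ∈ X := fun i => hsX (e i).2
    have hli : LinearIndependent ℝ y := by
      have := hs_li.comp e e.injective
      exact this
    set A : Matrix (Fin d) (Fin d) ℝ := Matrix.of fun i j => y j i with hA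
    have : LinearIndependent ℝ (fun i => A.transpose i) := by
      convert hli using 1
      rfl
    have hunit : IsUnit A := Matrix.linearIndependent_cols_iff_isUnit.mp this
    have hAdet : A.det ≠ 0 := by
      intro h
      rw [Matrix.isUnit_iff_isUnit_det, isUnit_iff_ne_zero] at hunit
      exact hunit h
    intro h
    have := hmax y hyX
    rw [h] at this
    simp only [abs_zero] at this
    exact hAdet (abs_eq_zero.mp (le_antisymm this (abs_nonneg _)))
  intro v hv
  refine ⟨fun i => (Matrix.updateCol M i v).det / M.det, fun i => ?_, ?_⟩
  · rw [abs_div, div_le_one (abs_pos.mpr hdet)]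
    have : Matrix.updateCol M i v = Matrix.of fun a b => (Function.update x i v) b a := by
      ext a b
      simp [Matrix.updateCol_apply, Function.update, hM]
      split <;> simp_all
    rw [this]
    exact hmax _ (fun j => by
      rcases eq_or_ne j i with rfl | hj
      · simpa using hv
      · simpa [Function.update_of_ne hj] using hx j)
  · have key : M.mulVec (Matrix.cramer M v) = M.det • v := Matrix.mulVec_cramer M v
    funext a
    have : v a = (M.det)⁻¹ * (M.mulVec (Matrix.cramer M v)) a := by
      rw [key]; simp [hdet]
    rw [this]
    simp only [Matrix.mulVec, dotProduct, Finset.sum_apply, Pi.smul_apply,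
      smul_eq_mul, Finset.mul_sum]
    refine Finset.sum_congr rfl fun j _ => ?_
    rw [Matrix.cramer_apply]
    simp [hM]
    ring
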